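/- For every integer n ≥ 1, every R > 0 and every σ ∈ (0,2), there exist a function φ : ℝⁿ → ℝ of class C² and a constant C > 0 (depending only on R, n and σ) such that: 0 ≤ φ(x) ≤ 1 for all x; φ(x) = 0 whenever |x| ≥ 2R/3; φ(x) = 1 whenever |x| ≤ R/2; and |∇φ(x)|² + |Δ(φ²)(x)| ≤ C·φ(x)^σ for all x ∈ ℝⁿ, where φ² denotes the pointwise square of φ. -/

import Mathlib

set_option maxHeartbeats 2000000
open Set Metric Filter

noncomputable def lap {n : ℕ} (g : EuclideanSpace ℝ (Fin n) → ℝ)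
    (x : EuclideanSpace ℝ (Fin n)) : ℝ :=
  ∑ i : Fin n, fderiv ℝ (fun y => fderiv ℝ g y (EuclideanSpace.single i 1)) x
    (EuclideanSpace.single i 1)


lemma aux1 {Mc M1 p q w g A B : ℝ} (hM : 0 ≤ Mc) (hM1 : 0 ≤ M1) (hM1c : M1 ≤ Mc)
    (hp : 0 ≤ p) (hq : 0 ≤ q) (hpq : p ≤ q) (hw : |w| ≤ A) (hg : |g| ≤ B) :
    |Mc * p * g + w * (Mc * (M1 * q * w))| ≤ (Mc * B + Mc * Mc * A ^ 2) * q := by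
  have hA0 : 0 ≤ A := (abs_nonneg w).trans hw
  have hB0 : 0 ≤ B := (abs_nonneg g).trans hg
  have e1 : |Mc * p * g| ≤ Mc * B * q := by
    rw [abs_mul, abs_mul, abs_of_nonneg hM, abs_of_nonneg hp]
    nlinarith [mul_nonneg hq (sub_nonneg.mpr hg), mul_nonneg (sub_nonneg.mpr hpq) (abs_nonneg g)]
  have e2 : |w * (Mc * (M1 * q * w))| ≤ Mc * Mc * A ^ 2 * q := by
    rw [abs_mul, abs_mul, abs_mul, abs_mul, abs_of_nonneg hM, abs_of_nonneg hM1,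
      abs_of_nonneg hq]
    have hww : |w| * |w| ≤ A * A := mul_le_mul hw hw (abs_nonneg w) hA0
    have h1 : M1 * (|w| * |w|) ≤ Mc * (A * A) :=
      mul_le_mul hM1c hww (mul_nonneg (abs_nonneg w) (abs_nonneg w)) hM
    have h2 : (Mc * q) * (M1 * (|w| * |w|)) ≤ (Mc * q) * (Mc * (A * A)) :=
      mul_le_mul_of_nonneg_left h1 (mul_nonneg hM hq)
    nlinarith [h2]
  calc |Mc * p * g + w * (Mc * (M1 * q * w))|
      ≤ |Mc * p * g| + |w * (Mc * (M1 * q * w))| := abs_add_le _ _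
    _ ≤ Mc * B * q + Mc * Mc * A ^ 2 * q := add_le_add e1 e2
    _ = (Mc * B + Mc * Mc * A ^ 2) * q := by ring

lemma aux2 {c q u A : ℝ} (hc : 0 ≤ c) (hq : 0 ≤ q) (hu : 0 ≤ u) (huA : u ≤ A) :
    c * q * u ^ 2 ≤ c * A ^ 2 * q := by
  have h : u * u ≤ A * A := mul_le_mul huA huA hu (hu.trans huA)
  nlinarith [mul_nonneg hc hq]

theorem stmt12
    (n : ℕ) (hn : 1 ≤ n) (R σ : ℝ) (hR : 0 < R) (hσ : σ ∈ Ioo (0:ℝ) 2) :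
    ∃ φ : EuclideanSpace ℝ (Fin n) → ℝ, ∃ C > 0,
      ContDiff ℝ 2 φ ∧
      (∀ x, 0 ≤ φ x ∧ φ x ≤ 1) ∧
      (∀ x, 2 * R / 3 ≤ ‖x‖ → φ x = 0) ∧
      (∀ x, ‖x‖ ≤ R / 2 → φ x = 1) ∧
      (∀ x, ‖fderiv ℝ φ x‖ ^ 2 + |lap (fun y => (φ y) ^ 2) x| ≤ C * φ x ^ σ) := by
  obtain ⟨hσ0, hσ2⟩ := hσ
  have h1 : (0:ℝ) < R/2 := by linarith
  have h2 : R/2 < 2*R/3 := by linarith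
  let f : ContDiffBump (0 : EuclideanSpace ℝ (Fin n)) := ⟨R/2, 2*R/3, h1, h2⟩
  have hcd : ContDiff ℝ ((⊤:ℕ∞):WithTop ℕ∞) f := f.contDiff
  set F := fderiv ℝ (⇑f) with hFdef
  have hdf : ∀ x, HasFDerivAt f (F x) x :=
    fun x => (hcd.differentiable (by simp) x).hasFDerivAt
  have hF1 : ContDiff ℝ ((1:ℕ∞):WithTop ℕ∞) F :=
    hcd.fderiv_right (by exact_mod_cast le_top)
  set G := fderiv ℝ F with hGdef
  have hdF : ∀ x, HasFDerivAt F (G x) x :=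
    fun x => (hF1.differentiable (by simp) x).hasFDerivAt
  have hsupp : HasCompactSupport (⇑f) := f.hasCompactSupport
  obtain ⟨A, hA⟩ := (hsupp.fderiv ℝ).exists_bound_of_continuous
    (hcd.continuous_fderiv (by simp))
  obtain ⟨B, hB⟩ : ∃ B, ∀ x, ‖G x‖ ≤ B := by
    have hc2 : Continuous (fun x => ‖G x‖) :=
      (continuous_norm (E := EuclideanSpace ℝ (Fin n) →L[ℝ] EuclideanSpace ℝ (Fin n) →L[ℝ] ℝ)).comp
        (hF1.continuous_fderiv (by simp))
    have hs2 : HasCompactSupport (fun x => ‖G x‖) := ((hsupp.fderiv ℝ).fderiv ℝ).comp_left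
      (norm_zero (E := EuclideanSpace ℝ (Fin n) →L[ℝ] EuclideanSpace ℝ (Fin n) →L[ℝ] ℝ))
    obtain ⟨B, hB⟩ := hs2.exists_bound_of_continuous hc2
    exact ⟨B, fun x => (Real.le_norm_self _).trans (hB x)⟩
  have hA0 : 0 ≤ A := le_trans (norm_nonneg _) (hA 0)
  have hB0 : 0 ≤ B := le_trans
    (norm_nonneg (E := EuclideanSpace ℝ (Fin n) →L[ℝ] EuclideanSpace ℝ (Fin n) →L[ℝ] ℝ) _) (hB 0)
  -- choice of the power m
  set m : ℕ := ⌈2 / (2 - σ)⌉₊ + 2 with hmdef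
  have hm2 : 2 ≤ m := by omega
  have hmR : 2 / (2 - σ) ≤ (m : ℝ) := by
    have := Nat.le_ceil (2 / (2 - σ))
    have : ((⌈2 / (2 - σ)⌉₊ : ℝ)) ≤ (m : ℝ) := by
      simp only [hmdef]; push_cast; linarith
    linarith [Nat.le_ceil (2 / (2 - σ))]
  have hmσ : (m:ℝ) * σ ≤ 2 * m - 2 := by
    have h2σ : (0:ℝ) < 2 - σ := by linarith
    have := (div_le_iff₀ h2σ).mp hmR
    nlinarith
  set M : ℕ := m * 2 with hMdef
  have hM1 : M - 1 - 1 = M - 2 := by omega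
  -- pointwise derivative of powers of f
  have hpow : ∀ (k : ℕ) x, HasFDerivAt (fun y => f y ^ k)
      (((k:ℝ) * f x ^ (k-1)) • F x) x :=
    fun k x => (hasDerivAt_pow k (f x)).comp_hasFDerivAt x (hdf x)
  set φ : EuclideanSpace ℝ (Fin n) → ℝ := fun x => f x ^ m with hφdef
  have hf0 : ∀ x, 0 ≤ f x := fun x => f.nonneg
  have hf1 : ∀ x, f x ≤ 1 := fun x => f.le_one
  have hfd : ∀ x, fderiv ℝ φ x = ((m:ℝ) * f x ^ (m-1)) • F x := fun x => (hpow m x).fderiv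
  -- second derivatives of f^M
  have hsq : (fun y => (φ y) ^ 2) = fun y => f y ^ M := by
    funext y; simp only [hφdef, hMdef, pow_mul]
  have key : ∀ (v : EuclideanSpace ℝ (Fin n)) x,
      fderiv ℝ (fun y => fderiv ℝ (fun z => f z ^ M) y v) x v
      = ((M:ℝ) * f x ^ (M-1)) * ((G x v) v)
        + (F x v) * ((M:ℝ) * ((((M:ℕ)-1:ℕ):ℝ) * f x ^ (M-2) * (F x v))) := by
    intro v x
    have hfun : (fun y => fderiv ℝ (fun z => f z ^ M) y v)
        = fun y => ((M:ℝ) * f y ^ (M-1)) * (F y v) := by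
      funext y
      rw [(hpow M y).fderiv]
      simp [ContinuousLinearMap.smul_apply, smul_eq_mul]
    rw [hfun]
    have ha : HasFDerivAt (fun y => (M:ℝ) * f y ^ (M-1))
        ((M:ℝ) • ((((M-1:ℕ):ℝ)) * f x ^ (M-1-1)) • F x) x :=
      (hpow (M-1) x).const_mul (M:ℝ)
    have hb : HasFDerivAt (fun y => F y v)
        ((ContinuousLinearMap.apply ℝ ℝ v).comp (G x)) x :=
      (ContinuousLinearMap.apply ℝ ℝ v).hasFDerivAt.comp x (hdF x)
    have hab := (ha.mul hb).fderiv
    rw [show (fun y => (M:ℝ) * f y ^ (M-1) * F y v) = ((fun y => (M:ℝ) * f y ^ (M-1)) * fun y => F y v)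
      from rfl, hab]
    simp [ContinuousLinearMap.add_apply, ContinuousLinearMap.smul_apply,
      ContinuousLinearMap.comp_apply, ContinuousLinearMap.apply_apply, smul_eq_mul, hM1]
  -- the constant
  set D : ℝ := (M:ℝ) * B + (M:ℝ) * M * A ^ 2 with hDdef
  set C : ℝ := (m:ℝ)^2 * A^2 + n * D + 1 with hCdef
  have hD0 : 0 ≤ D := by positivity
  have hC0 : (0:ℝ) < C := by positivity
  refine ⟨φ, C, hC0, ?_, ?_, ?_, ?_, ?_⟩
  · have h2f : ContDiff ℝ ((2:ℕ∞):WithTop ℕ∞) f := f.contDiff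
    exact_mod_cast h2f.pow m
  · exact fun x => ⟨pow_nonneg (hf0 x) m, pow_le_one₀ (hf0 x) (hf1 x)⟩
  · intro x hx
    have : f x = 0 := f.zero_of_le_dist (by simpa [dist_zero_right] using hx)
    simp [hφdef, this, zero_pow (by omega : m ≠ 0)]
  · intro x hx
    have : f x = 1 := f.one_of_mem_closedBall (by simpa [mem_closedBall, dist_zero_right] using hx)
    simp [hφdef, this]
  · intro x
    -- bound the gradient term
    have hgrad : ‖fderiv ℝ φ x‖ ^ 2 ≤ (m:ℝ)^2 * A^2 * f x ^ (M-2) := by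
      rw [hfd x, norm_smul]
      have h1 : ‖(m:ℝ) * f x ^ (m-1)‖ = (m:ℝ) * f x ^ (m-1) := by
        rw [Real.norm_eq_abs, abs_of_nonneg]
        exact mul_nonneg (by positivity) (pow_nonneg (hf0 x) _)
      rw [h1, mul_pow]
      have h2 : ((m:ℝ) * f x ^ (m - 1)) ^ 2 = (m:ℝ)^2 * f x ^ (M-2) := by
        rw [mul_pow, ← pow_mul]
        congr 2
        omega
      rw [h2]
      exact aux2 (by positivity) (pow_nonneg (hf0 x) _) (norm_nonneg _) (hA x)
    -- bound the laplacian term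
    have hlapb : |lap (fun y => (φ y) ^ 2) x| ≤ (n:ℝ) * D * f x ^ (M-2) := by
      rw [hsq]
      unfold lap
      have hterm : ∀ i : Fin n,
          |fderiv ℝ (fun y => fderiv ℝ (fun z => f z ^ M) y (EuclideanSpace.single i 1)) x
            (EuclideanSpace.single i 1)| ≤ D * f x ^ (M-2) := by
        intro i
        set v : EuclideanSpace ℝ (Fin n) := EuclideanSpace.single i 1 with hv
        have hvn : ‖v‖ = 1 := by simp [hv, EuclideanSpace.norm_single]
        rw [key v x]
        have hFv : |F x v| ≤ A := by
          calc |F x v| ≤ ‖F x‖ * ‖v‖ := (F x).le_opNorm v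
          _ = ‖F x‖ := by rw [hvn, mul_one]
          _ ≤ A := hA x
        have hGv : |(G x v) v| ≤ B := by
          calc |(G x v) v| ≤ ‖G x v‖ * ‖v‖ := (G x v).le_opNorm v
          _ ≤ (‖G x‖ * ‖v‖) * ‖v‖ := by
              gcongr; exact (G x).le_opNorm v
          _ = ‖G x‖ := by rw [hvn]; ring
          _ ≤ B := hB x
        have hple : f x ^ (M-1) ≤ f x ^ (M-2) :=
          pow_le_pow_of_le_one (hf0 x) (hf1 x) (by omega)
        rw [hDdef]
        exact aux1 (by positivity) (by positivity) (by exact_mod_cast Nat.sub_le M 1)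
          (pow_nonneg (hf0 x) _) (pow_nonneg (hf0 x) _)
          (pow_le_pow_of_le_one (hf0 x) (hf1 x) (by omega)) hFv hGv
      calc |∑ i : Fin n, fderiv ℝ (fun y => fderiv ℝ (fun z => f z ^ M) y
              (EuclideanSpace.single i 1)) x (EuclideanSpace.single i 1)|
          ≤ ∑ i : Fin n, |fderiv ℝ (fun y => fderiv ℝ (fun z => f z ^ M) y
              (EuclideanSpace.single i 1)) x (EuclideanSpace.single i 1)| :=
            Finset.abs_sum_le_sum_abs _ _
        _ ≤ (Finset.univ : Finset (Fin n)).card • (D * f x ^ (M-2)) :=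
            Finset.sum_le_card_nsmul _ _ _ (fun i _ => hterm i)
        _ = (n:ℝ) * D * f x ^ (M-2) := by
            simp [nsmul_eq_mul]; ring
    -- combine and compare with φ^σ
    have hpow_le : f x ^ (M-2) ≤ φ x ^ σ := by
      rcases eq_or_lt_of_le (hf0 x) with h0 | h0
      · rw [hφdef]
        simp only
        rw [← h0, zero_pow (by omega : M - 2 ≠ 0), zero_pow (by omega : m ≠ 0),
          Real.zero_rpow (ne_of_gt hσ0)]
      · have hφx : φ x = f x ^ m := rfl
        rw [hφx, ← Real.rpow_natCast (f x) (M-2), ← Real.rpow_natCast (f x) m,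
          ← Real.rpow_mul (le_of_lt h0)]
        apply Real.rpow_le_rpow_of_exponent_ge h0 (hf1 x)
        have : ((M - 2 : ℕ) : ℝ) = 2 * m - 2 := by
          rw [hMdef]; push_cast [Nat.cast_sub (by omega : 2 ≤ m * 2)]; ring
        rw [this]
        exact hmσ
    have hφσ0 : 0 ≤ φ x ^ σ := Real.rpow_nonneg (pow_nonneg (hf0 x) m) σ
    calc ‖fderiv ℝ φ x‖ ^ 2 + |lap (fun y => (φ y) ^ 2) x|
        ≤ (m:ℝ)^2 * A^2 * f x ^ (M-2) + (n:ℝ) * D * f x ^ (M-2) := by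
          exact add_le_add hgrad hlapb
      _ = ((m:ℝ)^2 * A^2 + n * D) * f x ^ (M-2) := by ring
      _ ≤ ((m:ℝ)^2 * A^2 + n * D) * (φ x ^ σ) := by
          apply mul_le_mul_of_nonneg_left hpow_le
          positivity
      _ ≤ C * φ x ^ σ := by
          rw [hCdef]
          nlinarith
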